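/- In the slim topology on R_L, the Λ-limit of a function λ ↦ (λ, φ(λ)) is unique, and two functions φ, ψ : L → ℝ have the same Λ-limit if and only if {λ ∈ L : φ(λ) = ψ(λ)} ∈ U. -/

import Mathlib

open Filter Set

variable (L : Type) (U : Ultrafilter L)

def RL := (L × ℝ) ⊕ Filter.Germ (U : Filter L) ℝ

def Nset (φ : L → ℝ) (Q : Set L) : Set (RL L U) :=
  (Sum.inl '' ((fun l => (l, φ l)) '' Q)) ∪ {Sum.inr (φ : Filter.Germ (U : Filter L) ℝ)}

def slimBasis : Set (Set (RL L U)) :=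
  {S | ∃ φ : L → ℝ, ∃ Q ∈ U, S = Nset L U φ Q} ∪ {S | ∃ A : Set (L × ℝ), S = Sum.inl '' A}

def slimTop : TopologicalSpace (RL L U) := TopologicalSpace.generateFrom (slimBasis L U)

lemma isOpen_Nset (φ : L → ℝ) (Q : Set L) (hQ : Q ∈ U) :
    @IsOpen _ (slimTop L U) (Nset L U φ Q) :=
  TopologicalSpace.GenerateOpen.basic _ (Or.inl ⟨φ, Q, hQ, rfl⟩)

lemma isOpen_inl (A : Set (L × ℝ)) : @IsOpen _ (slimTop L U) (Sum.inl '' A) :=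
  TopologicalSpace.GenerateOpen.basic _ (Or.inr ⟨A, rfl⟩)

lemma mem_Nset_inr (φ : L → ℝ) (Q : Set L) :
    (Sum.inr (φ : Filter.Germ (U : Filter L) ℝ) : RL L U) ∈ Nset L U φ Q :=
  Or.inr rfl

/-- A point of the form `inl p` is never in the image part mismatch helper. -/
lemma not_pure (hfree : ∀ x : L, (U : Filter L) ≠ pure x) (p : L × ℝ) (ψ : L → ℝ) :
    {l | (l, ψ l) ≠ p} ∈ U := by
  have h1 : {l | (l, ψ l) = p} ∉ U := by
    intro hm
    refine hfree p.1 (U.neBot.eq_pure_iff.2 (Filter.mem_of_superset hm ?_))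
    rintro l hl
    simp only [Set.mem_setOf_eq] at hl
    simp [← hl]
  exact Ultrafilter.compl_mem_iff_notMem.2 h1

/-- If `ψ` agrees with `φ` mod `U`, the sequence `l ↦ inl (l, ψ l)` tends to `inr [φ]`. -/
lemma tendsto_inr (φ ψ : L → ℝ) (h : {l | ψ l = φ l} ∈ U) :
    Filter.Tendsto (fun l => (Sum.inl (l, ψ l) : RL L U)) (U : Filter L)
      (@nhds (RL L U) (slimTop L U) (Sum.inr (φ : Filter.Germ (U : Filter L) ℝ))) := by
  refine (TopologicalSpace.tendsto_nhds_generateFrom_iff (β := RL L U) (g := slimBasis L U)).2 ?_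
  rintro s (⟨φ', Q, hQ, rfl⟩ | ⟨A, rfl⟩) hx
  · rcases hx with h1 | h2
    · rcases h1 with ⟨p, _, hp⟩; exact absurd hp (by simp)
    · replace h2 : (Sum.inr (φ : Filter.Germ (U : Filter L) ℝ) : RL L U) =
          Sum.inr (φ' : Filter.Germ (U : Filter L) ℝ) := h2
      have hgerm : (φ' : Filter.Germ (U : Filter L) ℝ) = φ := Sum.inr_injective h2.symm
      have hφφ' : {l | φ' l = ψ l} ∈ U := by
        have h3 : φ' =ᶠ[(U : Filter L)] φ := Filter.Germ.coe_eq.1 hgerm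
        filter_upwards [h3, h] with l h1 h2
        rw [h1, h2]
      filter_upwards [hQ, hφφ'] with l hl he
      exact Or.inl ⟨(l, φ' l), ⟨l, hl, rfl⟩, by rw [he]⟩
  · rcases hx with ⟨p, _, hp⟩; exact absurd hp (by simp)

/-- The Λ-limit of `l ↦ inl (l, φ l)` must be `inr [φ]`. -/
lemma limit_eq (hfree : ∀ x : L, (U : Filter L) ≠ pure x) (φ : L → ℝ) (x : RL L U)
    (h : Filter.Tendsto (fun l => (Sum.inl (l, φ l) : RL L U)) (U : Filter L)
      (@nhds (RL L U) (slimTop L U) x)) :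
    x = Sum.inr (φ : Filter.Germ (U : Filter L) ℝ) := by
  letI := slimTop L U
  cases x with
  | inl p =>
    exfalso
    have hopen : IsOpen ({Sum.inl p} : Set (RL L U)) := by
      have e : (Sum.inl '' {p} : Set (RL L U)) = {Sum.inl p} := Set.image_singleton
      rw [← e]; exact isOpen_inl L U {p}
    have hmem : {l | (Sum.inl (l, φ l) : RL L U) ∈ ({Sum.inl p} : Set (RL L U))} ∈ U :=
      h (hopen.mem_nhds rfl)
    have hsub : {l | (Sum.inl (l, φ l) : RL L U) ∈ ({Sum.inl p} : Set (RL L U))} ⊆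
        {l | (l, φ l) = p} := by
      rintro l hl
      exact Sum.inl_injective hl
    have h2 : {l | (l, φ l) = p} ∈ U := Filter.mem_of_superset hmem hsub
    have h3 := not_pure L U hfree p φ
    have : (∅ : Set L) ∈ U := by
      have := Filter.inter_mem h2 h3
      have e : {l | (l, φ l) = p} ∩ {l | (l, φ l) ≠ p} = (∅ : Set L) := by
        ext l; simp only [Set.mem_inter_iff, Set.mem_setOf_eq, Set.mem_empty_iff_false, iff_false]
        tauto
      rw [e] at this; exact this
    exact (U : Filter L).empty_notMem this
  | inr g =>
    induction g using Filter.Germ.inductionOn with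
    | _ ψ =>
    congr 1
    by_contra hne
    have hne' : {l | ψ l = φ l} ∉ U := fun hm => hne (Filter.Germ.coe_eq.2 hm)
    have hQ : {l | ψ l = φ l}ᶜ ∈ U := Ultrafilter.compl_mem_iff_notMem.2 hne'
    have hmem : {l | (Sum.inl (l, φ l) : RL L U) ∈ Nset L U ψ {l | ψ l = φ l}ᶜ} ∈ U :=
      h ((isOpen_Nset L U ψ _ hQ).mem_nhds (mem_Nset_inr L U ψ _))
    have hemp : {l | (Sum.inl (l, φ l) : RL L U) ∈ Nset L U ψ {l | ψ l = φ l}ᶜ} = ∅ := by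
      ext l
      simp only [Nset, Set.mem_union, Set.mem_image, Set.mem_singleton_iff, Set.mem_setOf_eq,
        Set.mem_empty_iff_false, iff_false]
      rintro (⟨q, ⟨l', hl', rfl⟩, hq⟩ | hq)
      · have hq' : (l', ψ l') = (l, φ l) := Sum.inl_injective hq
        obtain ⟨h1, h2⟩ := Prod.mk.inj hq'
        subst h1
        exact hl' h2
      · exact (Sum.inl_ne_inr hq).elim
    rw [hemp] at hmem
    exact (U : Filter L).empty_notMem hmem

/-- in the slim topology, Λ-limits are unique, and two functions
`φ, ψ : L → ℝ` have the same Λ-limit iff `{λ : φ(λ) = ψ(λ)} ∈ U`. -/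
theorem stmt5 (hfree : ∀ x : L, (U : Filter L) ≠ pure x) :
    (∀ (f : L → RL L U) (x y : RL L U),
        Filter.Tendsto f (U : Filter L) (@nhds (RL L U) (slimTop L U) x) →
        Filter.Tendsto f (U : Filter L) (@nhds (RL L U) (slimTop L U) y) → x = y) ∧
    (∀ φ ψ : L → ℝ,
        (∃ x : RL L U,
            Filter.Tendsto (fun l => (Sum.inl (l, φ l) : RL L U)) (U : Filter L)
              (@nhds (RL L U) (slimTop L U) x) ∧
            Filter.Tendsto (fun l => (Sum.inl (l, ψ l) : RL L U)) (U : Filter L)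
              (@nhds (RL L U) (slimTop L U) x)) ↔
          {l : L | φ l = ψ l} ∈ U) := by
  letI := slimTop L U
  constructor
  · intro f x y hx hy
    by_contra hne
    have sep : ∃ u v : Set (RL L U), IsOpen u ∧ IsOpen v ∧ x ∈ u ∧ y ∈ v ∧ u ∩ v = ∅ := by
      clear hx hy
      cases x with
      | inl p =>
        cases y with
        | inl q =>
          refine ⟨Sum.inl '' {p}, Sum.inl '' {q}, isOpen_inl L U _, isOpen_inl L U _,
            ⟨p, rfl, rfl⟩, ⟨q, rfl, rfl⟩, ?_⟩
          ext z
          simp only [Set.mem_inter_iff, Set.mem_image, Set.mem_singleton_iff,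
            Set.mem_empty_iff_false, iff_false, not_and]
          rintro ⟨_, rfl, rfl⟩ ⟨_, rfl, h⟩
          exact hne (by rw [h])
        | inr g =>
          induction g using Filter.Germ.inductionOn with
          | _ ψ =>
          refine ⟨Sum.inl '' {p}, Nset L U ψ {l | (l, ψ l) ≠ p}, isOpen_inl L U _,
            isOpen_Nset L U ψ _ (not_pure L U hfree p ψ), ⟨p, rfl, rfl⟩,
            mem_Nset_inr L U ψ _, ?_⟩
          ext z
          simp only [Set.mem_inter_iff, Set.mem_image, Set.mem_singleton_iff, Nset,
            Set.mem_union, Set.mem_empty_iff_false, iff_false, not_and]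
          rintro ⟨_, rfl, rfl⟩ (⟨q, ⟨l, hl, rfl⟩, hq⟩ | hq)
          · exact hl (Sum.inl_injective hq)
          · exact (Sum.inl_ne_inr hq).elim
      | inr g =>
        cases y with
        | inl q =>
          induction g using Filter.Germ.inductionOn with
          | _ ψ =>
          refine ⟨Nset L U ψ {l | (l, ψ l) ≠ q}, Sum.inl '' {q},
            isOpen_Nset L U ψ _ (not_pure L U hfree q ψ), isOpen_inl L U _,
            mem_Nset_inr L U ψ _, ⟨q, rfl, rfl⟩, ?_⟩
          ext z
          simp only [Set.mem_inter_iff, Set.mem_image, Set.mem_singleton_iff, Nset,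
            Set.mem_union, Set.mem_empty_iff_false, iff_false, not_and]
          rintro (⟨r, ⟨l, hl, rfl⟩, rfl⟩ | hq)
          · rintro ⟨_, rfl, hq⟩; exact hl (Sum.inl_injective hq).symm
          · subst hq
            rintro ⟨_, rfl, hq⟩; exact (Sum.inl_ne_inr hq).elim
        | inr g' =>
          induction g using Filter.Germ.inductionOn with
          | _ ψ =>
          induction g' using Filter.Germ.inductionOn with
          | _ χ =>
          have hneq : {l | ψ l = χ l} ∉ U := by
            intro hm
            exact hne (by rw [Filter.Germ.coe_eq.2 hm])
          have hQ : {l | ψ l = χ l}ᶜ ∈ U := Ultrafilter.compl_mem_iff_notMem.2 hneq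
          refine ⟨Nset L U ψ {l | ψ l = χ l}ᶜ, Nset L U χ {l | ψ l = χ l}ᶜ,
            isOpen_Nset L U ψ _ hQ, isOpen_Nset L U χ _ hQ,
            mem_Nset_inr L U ψ _, mem_Nset_inr L U χ _, ?_⟩
          ext z
          simp only [Set.mem_inter_iff, Nset, Set.mem_union, Set.mem_image,
            Set.mem_singleton_iff, Set.mem_empty_iff_false, iff_false, not_and]
          rintro (⟨r, ⟨l, hl, rfl⟩, rfl⟩ | hq)
          · rintro (⟨r', ⟨l', hl', rfl⟩, hq⟩ | hq)
            · obtain ⟨rfl, h2⟩ := Prod.ext_iff.1 (Sum.inl_injective hq)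
              exact hl h2.symm
            · exact (Sum.inl_ne_inr hq).elim
          · subst hq
            rintro (⟨r', ⟨l', hl', rfl⟩, hq⟩ | hq)
            · exact (Sum.inl_ne_inr hq).elim
            · exact hne (by rw [hq])
    obtain ⟨u, v, hu, hv, hxu, hyv, huv⟩ := sep
    have h1 : {l | f l ∈ u} ∈ U := hx (hu.mem_nhds hxu)
    have h2 : {l | f l ∈ v} ∈ U := hy (hv.mem_nhds hyv)
    have h3 : {l | f l ∈ u} ∩ {l | f l ∈ v} ∈ U := Filter.inter_mem h1 h2
    have h4 : {l | f l ∈ u} ∩ {l | f l ∈ v} = ∅ := by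
      ext l
      simp only [Set.mem_inter_iff, Set.mem_setOf_eq, Set.mem_empty_iff_false, iff_false, not_and]
      intro hlu hlv
      have hm : f l ∈ u ∩ v := ⟨hlu, hlv⟩
      rw [huv] at hm
      exact hm
    rw [h4] at h3
    exact (U : Filter L).empty_notMem h3
  · intro φ ψ
    constructor
    · rintro ⟨x, hφ, hψ⟩
      have e1 := limit_eq L U hfree φ x hφ
      have e2 := limit_eq L U hfree ψ x hψ
      rw [e1] at e2
      have : (φ : Filter.Germ (U : Filter L) ℝ) = ψ := Sum.inr_injective e2
      exact Filter.Germ.coe_eq.1 this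
    · intro h
      exact ⟨Sum.inr (φ : Filter.Germ (U : Filter L) ℝ),
        tendsto_inr L U φ φ (Filter.univ_mem' fun l => rfl), tendsto_inr L U φ ψ
          (by filter_upwards [h] with l hl using hl.symm)⟩
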